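/- For every real x ≥ 0 and every n ≥ 1, the matrix Z(x) satisfies Z(x) = u(x)·u(x)ᵀ + x·v(x)·v(x)ᵀ; consequently Z(x) is positive semidefinite with rank at most 2, and for x > 0 and n ≥ 2 its rank equals 2. -/

import Mathlib

open Matrix

/-- The `n × n` shift matrix `S` with `S_{i,i+1} = 1` and all other entries `0`. -/
def Smat (n : ℕ) : Matrix (Fin n) (Fin n) ℝ :=
  Matrix.of fun i j => if (i : ℕ) + 1 = (j : ℕ) then 1 else 0

/-- The signed Hankel rank-two matrix `Z(x)`: in 0-based indexing, the `(i,j)` entry is `0`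
if `i+j` is odd and `(−1)^{(i−j)/2} x^{(i+j)/2}` if `i+j` is even. -/
noncomputable def Zxmat (n : ℕ) (x : ℝ) : Matrix (Fin n) (Fin n) ℝ :=
  Matrix.of fun i j =>
    if ((i : ℕ) + (j : ℕ)) % 2 = 1 then 0
    else (-1 : ℝ) ^ (((i : ℤ) - (j : ℤ)) / 2) * x ^ (((i : ℕ) + (j : ℕ)) / 2)

/-- `u(x) ∈ ℝⁿ`: in 0-based indexing, even entries `u(x)_{2j} = (−x)^j`, odd entries `0`. -/
def uvec (n : ℕ) (x : ℝ) : Fin n → ℝ :=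
  fun i => if (i : ℕ) % 2 = 0 then (-x) ^ ((i : ℕ) / 2) else 0

/-- `v(x) = Sᵀ·u(x)`. -/
def vvec (n : ℕ) (x : ℝ) : Fin n → ℝ := (Smat n)ᵀ.mulVec (uvec n x)

lemma neg_one_zpow_nat_sub (a b : ℕ) : ((-1:ℝ)) ^ ((a:ℤ) - (b:ℤ)) = (-1:ℝ) ^ (a + b) := by
  rw [zpow_sub₀ (by norm_num : (-1:ℝ) ≠ 0), zpow_natCast, zpow_natCast, div_eq_mul_inv,
    ← inv_pow, pow_add]
  norm_num

lemma vvec_apply {n : ℕ} (x : ℝ) (i : Fin n) :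
    vvec n x i = if (i:ℕ) % 2 = 1 then (-x) ^ ((i:ℕ)/2) else 0 := by
  unfold vvec Smat uvec
  simp only [mulVec, dotProduct, transpose_apply, of_apply]
  rcases Nat.eq_zero_or_pos (i:ℕ) with h0 | hpos
  · rw [Finset.sum_eq_zero, if_neg (by omega)]
    intro j _
    rw [if_neg (by omega), zero_mul]
  · have hlt : (i:ℕ) - 1 < n := by omega
    rw [Finset.sum_eq_single ⟨(i:ℕ)-1, hlt⟩]
    · rw [if_pos (by simp; omega), one_mul]
      by_cases hpar : (i:ℕ) % 2 = 1
      · rw [if_pos (by simp; omega), if_pos hpar]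
        congr 1
        simp; omega
      · rw [if_neg (by simp; omega), if_neg hpar]
    · intro b _ hb
      rw [if_neg (fun h => hb (by apply Fin.ext; simp at h ⊢; omega)), zero_mul]
    · intro h; exact absurd (Finset.mem_univ _) h

lemma Zx_decomp {n : ℕ} (x : ℝ) :
    Zxmat n x = vecMulVec (uvec n x) (uvec n x) + x • vecMulVec (vvec n x) (vvec n x) := by
  ext i j
  simp only [Zxmat, of_apply, Matrix.add_apply, Matrix.smul_apply, vecMulVec_apply, uvec,
    vvec_apply, smul_eq_mul]
  rcases Nat.even_or_odd (i:ℕ) with ⟨a, ha⟩ | ⟨a, ha⟩ <;>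
    rcases Nat.even_or_odd (j:ℕ) with ⟨b, hb⟩ | ⟨b, hb⟩
  · have hi2 : ((i:ℤ) - (j:ℤ))/2 = (a:ℤ) - b := by omega
    rw [if_neg (by omega), hi2, if_pos (by omega), if_pos (by omega),
      if_neg (show ¬ (i:ℕ) % 2 = 1 by omega), neg_one_zpow_nat_sub,
      show ((i:ℕ)+(j:ℕ))/2 = a + b by omega, show (i:ℕ)/2 = a by omega,
      show (j:ℕ)/2 = b by omega, neg_pow, neg_pow, pow_add, pow_add]
    ring
  · rw [if_pos (by omega), if_neg (show ¬ (j:ℕ) % 2 = 0 by omega),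
      if_neg (show ¬ (i:ℕ) % 2 = 1 by omega)]
    ring
  · rw [if_pos (by omega), if_neg (show ¬ (i:ℕ) % 2 = 0 by omega),
      if_neg (show ¬ (j:ℕ) % 2 = 1 by omega)]
    ring
  · have hi2 : ((i:ℤ) - (j:ℤ))/2 = (a:ℤ) - b := by omega
    rw [if_neg (by omega), hi2, if_neg (show ¬ (i:ℕ) % 2 = 0 by omega),
      if_pos (show (i:ℕ) % 2 = 1 by omega), if_pos (show (j:ℕ) % 2 = 1 by omega),
      neg_one_zpow_nat_sub, show ((i:ℕ)+(j:ℕ))/2 = a + b + 1 by omega,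
      show (i:ℕ)/2 = a by omega, show (j:ℕ)/2 = b by omega, neg_pow, neg_pow,
      pow_add, pow_add, pow_add]
    ring

lemma quad_vecMulVec {n : ℕ} (w y : Fin n → ℝ) :
    y ⬝ᵥ ((vecMulVec w w) *ᵥ y) = (w ⬝ᵥ y)^2 := by
  have h : (vecMulVec w w) *ᵥ y = (w ⬝ᵥ y) • w := by
    ext i
    simp only [vecMulVec_apply, mulVec, dotProduct, Pi.smul_apply, smul_eq_mul,
      Finset.sum_mul, Finset.mul_sum]
    exact Finset.sum_congr rfl fun j _ => by ring
  rw [h, dotProduct_smul, smul_eq_mul, dotProduct_comm, sq]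

lemma Zx_psd {n : ℕ} (x : ℝ) (hx : 0 ≤ x) : (Zxmat n x).PosSemidef := by
  rw [Zx_decomp, posSemidef_iff_dotProduct_mulVec]
  constructor
  · ext i j
    simp only [conjTranspose_apply, Matrix.add_apply, Matrix.smul_apply, vecMulVec_apply,
      star_trivial, smul_eq_mul]
    ring
  · intro y
    simp only [star_trivial, add_mulVec, smul_mulVec, dotProduct_add, dotProduct_smul,
      smul_eq_mul, quad_vecMulVec]
    positivity

lemma rank_add_le' {n : ℕ} (A B : Matrix (Fin n) (Fin n) ℝ) :
    (A + B).rank ≤ A.rank + B.rank := by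
  have hr : LinearMap.range (A + B).mulVecLin ≤
      LinearMap.range A.mulVecLin ⊔ LinearMap.range B.mulVecLin := by
    rintro z ⟨y, rfl⟩
    rw [mulVecLin_add]
    exact Submodule.add_mem_sup ⟨y, rfl⟩ ⟨y, rfl⟩
  calc (A + B).rank ≤ Module.finrank ℝ
        (LinearMap.range A.mulVecLin ⊔ LinearMap.range B.mulVecLin : Submodule ℝ (Fin n → ℝ)) :=
        Submodule.finrank_mono hr
    _ ≤ A.rank + B.rank := by
        have := Submodule.finrank_sup_add_finrank_inf_eq
          (LinearMap.range A.mulVecLin) (LinearMap.range B.mulVecLin)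
        unfold Matrix.rank
        omega

lemma rank_vecMulVec_le' {n : ℕ} (w v : Fin n → ℝ) : (vecMulVec w v).rank ≤ 1 := by
  rw [vecMulVec_eq Unit]
  exact (rank_mul_le_left _ _).trans ((rank_le_card_width _).trans (by simp))

/-- `Z(x) = u(x)·u(x)ᵀ + x·v(x)·v(x)ᵀ`; hence `Z(x)` is positive semidefinite of rank at
most 2, and of rank exactly 2 when `x > 0` and `n ≥ 2`. -/
theorem Zx_rank_two_decomposition {n : ℕ} (hn : 1 ≤ n) (x : ℝ) (hx : 0 ≤ x) :
    Zxmat n x = vecMulVec (uvec n x) (uvec n x) + x • vecMulVec (vvec n x) (vvec n x) ∧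
    (Zxmat n x).PosSemidef ∧
    (Zxmat n x).rank ≤ 2 ∧
    (0 < x → 2 ≤ n → (Zxmat n x).rank = 2) := by
  have hdec := Zx_decomp (n := n) x
  have hsm : x • vecMulVec (vvec n x) (vvec n x) = vecMulVec (x • vvec n x) (vvec n x) := by
    ext i j
    simp [vecMulVec_apply, mul_assoc]
  have hle : (Zxmat n x).rank ≤ 2 := by
    rw [hdec, hsm]
    calc (vecMulVec (uvec n x) (uvec n x) + vecMulVec (x • vvec n x) (vvec n x)).rank
        ≤ (vecMulVec (uvec n x) (uvec n x)).rank + (vecMulVec (x • vvec n x) (vvec n x)).rank :=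
          rank_add_le' _ _
      _ ≤ 1 + 1 := add_le_add (rank_vecMulVec_le' _ _) (rank_vecMulVec_le' _ _)
  refine ⟨hdec, Zx_psd x hx, hle, fun hxpos hn2 => ?_⟩
  refine le_antisymm hle ?_
  set Z := Zxmat n x with hZ
  set i0 : Fin n := ⟨0, by omega⟩
  set i1 : Fin n := ⟨1, by omega⟩
  set w0 : Fin n → ℝ := Z.mulVec (Pi.single i0 1) with hw0
  set w1 : Fin n → ℝ := Z.mulVec (Pi.single i1 1) with hw1
  have hcol : ∀ (j i : Fin n), Z.mulVec (Pi.single j 1) i = Z i j := by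
    intro j i
    simp [mulVec, dotProduct, Pi.single_apply]
  have hZ00 : Z i0 i0 = 1 := by norm_num [hZ, Zxmat, i0]
  have hZ01 : Z i0 i1 = 0 := by norm_num [hZ, Zxmat, i0, i1]
  have hZ10 : Z i1 i0 = 0 := by norm_num [hZ, Zxmat, i0, i1]
  have hZ11 : Z i1 i1 = x := by norm_num [hZ, Zxmat, i1]
  have hli : LinearIndependent ℝ ![w0, w1] := by
    rw [LinearIndependent.pair_iff]
    intro s t hst
    have h0 := congrFun hst i0
    have h1 := congrFun hst i1
    simp only [Pi.add_apply, Pi.smul_apply, smul_eq_mul, Pi.zero_apply, hw0, hw1,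
      hcol, hZ00, hZ01, hZ10, hZ11] at h0 h1
    constructor
    · linarith
    · have : t * x = 0 := by linarith
      rcases mul_eq_zero.mp this with h | h
      · exact h
      · exact absurd h (ne_of_gt hxpos)
  have hspan : Submodule.span ℝ (Set.range ![w0, w1]) ≤ LinearMap.range Z.mulVecLin := by
    rw [Submodule.span_le]
    rintro z ⟨k, rfl⟩
    fin_cases k
    · exact ⟨Pi.single i0 1, rfl⟩
    · exact ⟨Pi.single i1 1, rfl⟩
  have h2 : Module.finrank ℝ (Submodule.span ℝ (Set.range ![w0, w1])) = 2 := by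
    rw [finrank_span_eq_card hli]
    simp
  calc (2:ℕ) = Module.finrank ℝ (Submodule.span ℝ (Set.range ![w0, w1])) := h2.symm
    _ ≤ Z.rank := Submodule.finrank_mono hspan
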